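/- Let U ∈ ℝ^{d₁×r}, V ∈ ℝ^{d₂×r}, M* ∈ ℝ^{d₁×d₂}, and 0 < ε ≤ ‖M*‖_F. If ‖UVᵀ‖_F ≤ 3‖M*‖_F and ‖UᵀU − VᵀV‖_F ≤ ε, then ‖U‖_F² ≤ 5√r·‖M*‖_F and ‖V‖_F² ≤ 5√r·‖M*‖_F. -/
import Mathlib

open Matrix

/-- Frobenius norm of a real matrix. -/
noncomputable def frob {m n : Type*} [Fintype m] [Fintype n] (A : Matrix m n ℝ) : ℝ :=
  Real.sqrt (∑ i, ∑ j, A i j ^ 2)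

noncomputable def fdot {m n : Type*} [Fintype m] [Fintype n] (A B : Matrix m n ℝ) : ℝ :=
  ∑ i, ∑ j, A i j * B i j

section helpers
variable {m n : Type*} [Fintype m] [Fintype n]

lemma frob_nonneg (A : Matrix m n ℝ) : 0 ≤ frob A := Real.sqrt_nonneg _

lemma sumsq_nonneg (A : Matrix m n ℝ) : 0 ≤ ∑ i, ∑ j, A i j ^ 2 :=
  Finset.sum_nonneg fun _ _ => Finset.sum_nonneg fun _ _ => sq_nonneg _

lemma frob_sq (A : Matrix m n ℝ) : frob A ^ 2 = fdot A A := by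
  rw [frob, Real.sq_sqrt (sumsq_nonneg A), fdot]
  simp [sq]

lemma abs_fdot_le (A B : Matrix m n ℝ) : |fdot A B| ≤ frob A * frob B := by
  have h2 : (fdot A B) ^ 2 ≤ (∑ i, ∑ j, A i j ^ 2) * (∑ i, ∑ j, B i j ^ 2) := by
    have := Finset.sum_mul_sq_le_sq_mul_sq Finset.univ
      (fun p : m × n => A p.1 p.2) (fun p : m × n => B p.1 p.2)
    simpa [fdot, Fintype.sum_prod_type] using this
  calc |fdot A B| = Real.sqrt ((fdot A B) ^ 2) := (Real.sqrt_sq_eq_abs _).symm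
    _ ≤ Real.sqrt ((∑ i, ∑ j, A i j ^ 2) * (∑ i, ∑ j, B i j ^ 2)) := Real.sqrt_le_sqrt h2
    _ = frob A * frob B := Real.sqrt_mul (sumsq_nonneg A) _

lemma fdot_eq_trace (A B : Matrix m n ℝ) : fdot A B = (Aᵀ * B).trace := by
  simp only [Matrix.trace, Matrix.diag, Matrix.mul_apply, Matrix.transpose_apply, fdot]
  exact Finset.sum_comm

lemma fdot_add_right (A B C : Matrix m n ℝ) : fdot A (B + C) = fdot A B + fdot A C := by
  simp [fdot, mul_add, Finset.sum_add_distrib]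

end helpers

lemma frob_one (r : ℕ) : frob (1 : Matrix (Fin r) (Fin r) ℝ) = Real.sqrt r := by
  unfold frob
  congr 1
  have h : ∀ i : Fin r, ∑ j, ((1 : Matrix (Fin r) (Fin r) ℝ) i j) ^ 2 = 1 := by
    intro i
    rw [Finset.sum_eq_single i]
    · simp [Matrix.one_apply]
    · intro b _ hb; simp [Matrix.one_apply, (Ne.symm hb)]
    · intro h; exact absurd (Finset.mem_univ i) h
  simp [h]

lemma trace_eq_fdot_one {r : ℕ} (X : Matrix (Fin r) (Fin r) ℝ) :
    X.trace = fdot (1 : Matrix (Fin r) (Fin r) ℝ) X := by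
  rw [fdot_eq_trace]
  simp

lemma abs_trace_le {r : ℕ} (X : Matrix (Fin r) (Fin r) ℝ) :
    |X.trace| ≤ Real.sqrt r * frob X := by
  rw [trace_eq_fdot_one]
  calc |fdot 1 X| ≤ frob (1 : Matrix (Fin r) (Fin r) ℝ) * frob X := abs_fdot_le _ _
    _ = Real.sqrt r * frob X := by rw [frob_one]

/-- If `‖UVᵀ‖_F ≤ 3‖M*‖_F` and `‖UᵀU − VᵀV‖_F ≤ ε ≤ ‖M*‖_F`, then both factors are
bounded: `‖U‖_F² ≤ 5√r‖M*‖_F` and `‖V‖_F² ≤ 5√r‖M*‖_F`. -/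
theorem balanced_implies_bounded {d₁ d₂ r : ℕ}
    (U : Matrix (Fin d₁) (Fin r) ℝ) (V : Matrix (Fin d₂) (Fin r) ℝ)
    (M : Matrix (Fin d₁) (Fin d₂) ℝ) (ε : ℝ)
    (hε0 : 0 < ε) (hεM : ε ≤ frob M)
    (hprod : frob (U * Vᵀ) ≤ 3 * frob M)
    (hbal : frob (Uᵀ * U - Vᵀ * V) ≤ ε) :
    frob U ^ 2 ≤ 5 * Real.sqrt r * frob M ∧ frob V ^ 2 ≤ 5 * Real.sqrt r * frob M := by
  set Δ : Matrix (Fin r) (Fin r) ℝ := Uᵀ * U - Vᵀ * V with hΔ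
  have hm : 0 < frob M := lt_of_lt_of_le hε0 hεM
  -- key: fdot (UᵀU) (VᵀV) = frob (UVᵀ)^2
  have hkey : fdot (Uᵀ * U) (Vᵀ * V) = fdot (U * Vᵀ) (U * Vᵀ) := by
    rw [fdot_eq_trace, fdot_eq_trace]
    simp only [Matrix.transpose_mul, Matrix.transpose_transpose]
    rw [Matrix.mul_assoc V Uᵀ (U * Vᵀ), Matrix.trace_mul_comm V (Uᵀ * (U * Vᵀ))]
    simp only [Matrix.mul_assoc]
  -- expansion
  have hexp : fdot (Uᵀ * U) (Uᵀ * U) = fdot (Uᵀ * U) (Vᵀ * V) + fdot (Uᵀ * U) Δ := by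
    rw [← fdot_add_right]
    congr 1
    rw [hΔ]
    abel
  set x := frob (Uᵀ * U) with hx
  have hx0 : 0 ≤ x := frob_nonneg _
  have hCS : fdot (Uᵀ * U) Δ ≤ x * ε := by
    calc fdot (Uᵀ * U) Δ ≤ |fdot (Uᵀ * U) Δ| := le_abs_self _
      _ ≤ x * frob Δ := abs_fdot_le _ _
      _ ≤ x * ε := by nlinarith [frob_nonneg Δ]
  have hUV2 : fdot (U * Vᵀ) (U * Vᵀ) ≤ 9 * frob M ^ 2 := by
    rw [← frob_sq]
    nlinarith [frob_nonneg (U * Vᵀ)]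
  have hxsq : x ^ 2 ≤ 9 * frob M ^ 2 + x * ε := by
    rw [frob_sq, hexp, hkey]; linarith
  have hx4 : x ≤ 4 * frob M := by nlinarith
  have htrU : (Uᵀ * U).trace = frob U ^ 2 := by
    rw [frob_sq, fdot_eq_trace]
  have htrV : (Vᵀ * V).trace = frob V ^ 2 := by
    rw [frob_sq, fdot_eq_trace]
  have hr0 : (0:ℝ) ≤ Real.sqrt r := Real.sqrt_nonneg _
  have hU : frob U ^ 2 ≤ 4 * Real.sqrt r * frob M := by
    rw [← htrU]
    calc (Uᵀ * U).trace ≤ |(Uᵀ * U).trace| := le_abs_self _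
      _ ≤ Real.sqrt r * x := abs_trace_le _
      _ ≤ Real.sqrt r * (4 * frob M) := by nlinarith
      _ = 4 * Real.sqrt r * frob M := by ring
  have hΔtr : |Δ.trace| ≤ Real.sqrt r * ε := by
    calc |Δ.trace| ≤ Real.sqrt r * frob Δ := abs_trace_le _
      _ ≤ Real.sqrt r * ε := by nlinarith [frob_nonneg Δ]
  have hV : frob V ^ 2 ≤ 5 * Real.sqrt r * frob M := by
    have h1 : (Vᵀ * V).trace = (Uᵀ * U).trace - Δ.trace := by
      rw [hΔ, Matrix.trace_sub]; ring
    have h2 := abs_le.mp hΔtr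
    have h3 : Real.sqrt r * ε ≤ Real.sqrt r * frob M := by nlinarith
    rw [← htrV, h1, htrU]
    nlinarith
  exact ⟨by nlinarith, hV⟩
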